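/- Let M and N be positive integers with M ≡ 3 (mod 4) and N ≡ 3 (mod 4), and suppose that no prime q with q ≡ 3 (mod 4) divides both M and N. Then 2·M·N is not a sum of two squares of integers, i.e., there are no integers a, b with a² + b² = 2·M·N. -/

import Mathlib

/-- A natural number congruent to 3 mod 4 has a prime factor `q ≡ 3 (mod 4)`
occurring to an odd power. -/
lemma exists_odd_padicValNat_of_mod_four_eq_three {m : ℕ} (hm : m % 4 = 3) :
    ∃ q : ℕ, q.Prime ∧ q % 4 = 3 ∧ Odd (padicValNat q m) := by
  by_contra h
  push_neg at h
  have hsq : ∃ x y : ℕ, m = x ^ 2 + y ^ 2 := by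
    rw [Nat.eq_sq_add_sq_iff]
    intro q hq hq4
    rcases Nat.even_or_odd (padicValNat q m) with he | ho
    · exact he
    · exact absurd ho (h q (Nat.prime_of_mem_primeFactors hq) hq4)
  obtain ⟨x, y, hxy⟩ := hsq
  have key : ∀ u v : ZMod 4, u ^ 2 + v ^ 2 ≠ 3 := by decide
  apply key (x : ZMod 4) (y : ZMod 4)
  have h1 : ((m : ℕ) : ZMod 4) = ((x : ℕ) : ZMod 4) ^ 2 + ((y : ℕ) : ZMod 4) ^ 2 := by
    rw [hxy]; push_cast; ring
  rw [← h1, ← ZMod.natCast_mod, hm] ; rfl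

theorem two_mul_not_sum_of_two_squares (M N : ℤ) (hM : 0 < M) (hN : 0 < N)
    (hM4 : M % 4 = 3) (hN4 : N % 4 = 3)
    (hcop : ∀ q : ℤ, Prime q → q % 4 = 3 → ¬(q ∣ M ∧ q ∣ N)) :
    ¬ ∃ a b : ℤ, a ^ 2 + b ^ 2 = 2 * M * N := by
  rintro ⟨a, b, hab⟩
  set m := M.natAbs with hmdef
  set n := N.natAbs with hndef
  have hMm : (m : ℤ) = M := Int.natAbs_of_nonneg hM.le
  have hNn : (n : ℤ) = N := Int.natAbs_of_nonneg hN.le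
  have hm4 : m % 4 = 3 := by omega
  have hn4 : n % 4 = 3 := by omega
  have hm0 : m ≠ 0 := by omega
  have hn0 : n ≠ 0 := by omega
  obtain ⟨q, hq, hq4, hqodd⟩ := exists_odd_padicValNat_of_mod_four_eq_three hm4
  haveI : Fact q.Prime := ⟨hq⟩
  -- q divides m
  have hqm : q ∣ m := by
    by_contra hf
    rw [padicValNat.eq_zero_of_not_dvd hf] at hqodd
    have := Nat.odd_iff.mp hqodd
    omega
  have hqZ : Prime (q : ℤ) := Int.prime_iff_natAbs_prime.mpr (by simpa using hq)
  have hq4Z : (q : ℤ) % 4 = 3 := by omega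
  have hqM : (q : ℤ) ∣ M := hMm ▸ Int.natCast_dvd_natCast.mpr hqm
  have hqN : ¬ q ∣ n := by
    intro hf
    exact hcop q hqZ hq4Z ⟨hqM, hNn ▸ Int.natCast_dvd_natCast.mpr hf⟩
  have hq2 : ¬ q ∣ 2 := by
    intro hf
    have := Nat.le_of_dvd (by norm_num) hf
    omega
  -- translate equation to ℕ
  have habN : a.natAbs ^ 2 + b.natAbs ^ 2 = 2 * m * n := by
    have : ((a.natAbs ^ 2 + b.natAbs ^ 2 : ℕ) : ℤ) = ((2 * m * n : ℕ) : ℤ) := by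
      push_cast
      rw [sq_abs, sq_abs, hMm, hNn]
      linarith [hab]
    exact_mod_cast this
  have hkey : Even (padicValNat q (2 * m * n)) := by
    have := Nat.eq_sq_add_sq_iff.mp ⟨a.natAbs, b.natAbs, habN.symm⟩ q
      (Nat.mem_primeFactors.mpr ⟨hq, dvd_mul_of_dvd_left (dvd_mul_of_dvd_right hqm 2) n,
        Nat.mul_ne_zero (Nat.mul_ne_zero two_ne_zero hm0) hn0⟩) hq4
    exact this
  rw [padicValNat.mul (by omega) hn0, padicValNat.mul (by norm_num) hm0,
    padicValNat.eq_zero_of_not_dvd hq2, padicValNat.eq_zero_of_not_dvd hqN] at hkey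
  simp only [zero_add, add_zero] at hkey
  have h1 := Nat.even_iff.mp hkey
  have h2 := Nat.odd_iff.mp hqodd
  omega
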